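/- Let t ≥ 2. If F ⊆ 2^[n] is a t-cover-free family, then |F| ≤ t + C(n, ⌈(n - t)/C(t+1,2)⌉). -/

import Mathlib

open Finset FinsetFamily

/-- A family `F` of subsets is `t`-cover-free if no member is contained in the
union of at most `t` other members. -/
def CoverFree {α : Type*} [DecidableEq α] (t : ℕ) (F : Finset (Finset α)) : Prop :=
  ∀ A₀ ∈ F, ∀ S ⊆ F.erase A₀, S.Nonempty → S.card ≤ t → ¬ A₀ ⊆ S.biUnion id

section auxiliary

variable {n t : ℕ} {F : Finset (Finset (Fin n))}


lemma cf_antichain (ht : 1 ≤ t) (h : CoverFree t F) {A B : Finset (Fin n)}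
    (hA : A ∈ F) (hB : B ∈ F) (hne : A ≠ B) : ¬ A ⊆ B := by
  intro hsub
  refine h A hA {B} ?_ ⟨B, mem_singleton_self _⟩ (by simpa using ht) (by simpa using hsub)
  simp only [singleton_subset_iff, mem_erase]
  exact ⟨hne.symm, hB⟩

lemma cf_nonempty (ht : 1 ≤ t) (h : CoverFree t F) (h2 : 2 ≤ F.card)
    {D : Finset (Fin n)} (hD : D ∈ F) : D.Nonempty := by
  obtain ⟨B, hB, hne⟩ := (Finset.one_lt_card_iff_nontrivial.1 h2).exists_ne D
  rw [nonempty_iff_ne_empty]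
  rintro rfl
  exact cf_antichain ht h hD hB (Ne.symm hne) (empty_subset _)



/-- Core covering lemma: if `D` is "bad" (every `k`-subset of `D` lies in another member),
then removing the union of `t - d` other members leaves at least `d*k + 1` elements. -/
lemma cf_core (ht : 2 ≤ t) (h : CoverFree t F) (k : ℕ)
    {D : Finset (Fin n)} (hD : D ∈ F) (hDk : k ≤ D.card) (hDne : D.Nonempty)
    (hbad : ∀ T ⊆ D, T.card = k → ∃ C ∈ F.erase D, T ⊆ C) :
    ∀ d : ℕ, d ≤ t → ∀ 𝒮 ⊆ F.erase D, 𝒮.card = t - d →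
      d * k + 1 ≤ (D \ 𝒮.biUnion id).card := by
  intro d
  induction d with
  | zero =>
    intro _ 𝒮 h𝒮 hcard
    have hne : 𝒮.Nonempty := by
      rw [← card_pos, hcard]; omega
    have := h D hD 𝒮 h𝒮 hne (by omega)
    rw [Nat.zero_mul, Nat.zero_add, Nat.succ_le, card_pos, sdiff_nonempty]
    exact this
  | succ d ih =>
    intro hdt 𝒮 h𝒮 hcard
    set U := D \ 𝒮.biUnion id with hU
    have hUD : U ⊆ D := sdiff_subset
    -- U is nonempty
    have hUne : U.Nonempty := by
      rcases 𝒮.eq_empty_or_nonempty with rfl | hne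
      · simpa [hU] using hDne
      · rw [sdiff_nonempty]
        exact h D hD 𝒮 h𝒮 hne (by omega)
    by_contra hcon
    push_neg at hcon
    have hcon' : U.card ≤ (d + 1) * k := by omega
    rcases lt_or_ge U.card k with hlt | hge
    · -- pad U to a k-subset of D
      obtain ⟨T, hUT, hTD, hTcard⟩ := exists_subsuperset_card_eq hUD (le_of_lt hlt) hDk
      obtain ⟨C, hC, hTC⟩ := hbad T hTD hTcard
      refine h D hD (insert C 𝒮) ?_ (insert_nonempty _ _) ?_ ?_
      · intro x hx
        rcases mem_insert.1 hx with rfl | hx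
        · exact hC
        · exact h𝒮 hx
      · calc (insert C 𝒮).card ≤ 𝒮.card + 1 := card_insert_le _ _
          _ ≤ t := by omega
      · intro x hx
        rw [mem_biUnion]
        by_cases hxU : x ∈ 𝒮.biUnion id
        · obtain ⟨B, hB, hxB⟩ := mem_biUnion.1 hxU
          exact ⟨B, mem_insert_of_mem hB, hxB⟩
        · exact ⟨C, mem_insert_self _ _, hTC (hUT (mem_sdiff.2 ⟨hx, hxU⟩))⟩
    · -- take a k-subset of U
      have hk1 : 1 ≤ k := by
        by_contra hk0
        have hk0' : k = 0 := by omega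
        subst hk0'
        have := hUne.card_pos
        simp at hcon'
        omega
      obtain ⟨T, hTU, hTcard⟩ := exists_subset_card_eq hge
      obtain ⟨C, hC, hTC⟩ := hbad T (hTU.trans hUD) hTcard
      have hCnot : C ∉ 𝒮 := by
        intro hmem
        obtain ⟨x, hxT⟩ : T.Nonempty := by rw [← card_pos, hTcard]; omega
        have hxU : x ∈ U := hTU hxT
        exact (mem_sdiff.1 hxU).2 (mem_biUnion.2 ⟨C, hmem, hTC hxT⟩)
      have hcard' : (insert C 𝒮).card = t - d := by
        rw [card_insert_of_notMem hCnot, hcard]; omega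
      have h𝒮' : insert C 𝒮 ⊆ F.erase D := by
        intro x hx
        rcases mem_insert.1 hx with rfl | hx
        · exact hC
        · exact h𝒮 hx
      have hIH := ih (by omega) (insert C 𝒮) h𝒮' hcard'
      have hsub : D \ (insert C 𝒮).biUnion id ⊆ U \ T := by
        intro x hx
        rw [mem_sdiff] at hx ⊢
        rw [biUnion_insert, mem_union] at hx
        push_neg at hx
        refine ⟨mem_sdiff.2 ⟨hx.1, hx.2.2⟩, fun hxT => hx.2.1 (hTC hxT)⟩
      have hle := card_le_card hsub
      have h1 : (U \ T).card + T.card = U.card := card_sdiff_add_card_eq_card hTU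
      have hmul : (d + 1) * k = d * k + k := by ring
      rw [hmul] at hcon'
      set m := d * k with hm
      omega

lemma cf_sum (ht : 2 ≤ t) (h : CoverFree t F) (k : ℕ)
    (S : Finset (Finset (Fin n))) :
    S ⊆ F →
    (∀ D ∈ S, k ≤ D.card ∧ D.Nonempty ∧
      (∀ T ⊆ D, T.card = k → ∃ C ∈ F.erase D, T ⊆ C)) →
    S.card ≤ t + 1 →
    ∑ i ∈ Finset.range S.card, ((t - i) * k + 1) ≤ (S.biUnion id).card := by
  classical
  induction S using Finset.induction_on with
  | empty => simp
  | @insert D S' hDS' ih =>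
    intro hSF hbad hcard
    have hS'F : S' ⊆ F := (subset_insert _ _).trans hSF
    have hDF : D ∈ F := hSF (mem_insert_self _ _)
    have hcc : (insert D S').card = S'.card + 1 := card_insert_of_notMem hDS'
    have hS't : S'.card ≤ t := by omega
    have hS'sub : S' ⊆ F.erase D := by
      intro x hx
      exact mem_erase.2 ⟨fun hxa => hDS' (hxa ▸ hx), hS'F hx⟩
    obtain ⟨hDk, hDne, hDbad⟩ := hbad D (mem_insert_self _ _)
    have hcore := cf_core ht h k hDF hDk hDne hDbad (t - S'.card) (by omega)
      S' hS'sub (by omega)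
    have hih := ih hS'F (fun D hD => hbad D (mem_insert_of_mem hD)) (by omega)
    rw [hcc, Finset.sum_range_succ, biUnion_insert, id_eq]
    have hct : #(D \ S'.biUnion id) + #(S'.biUnion id) = #(D ∪ S'.biUnion id) :=
      card_sdiff_add_card _ _
    have hle : #(D ∪ S'.biUnion id) ≤ #((insert D S').biUnion id) := by
      apply card_le_card
      rw [biUnion_insert, id_eq]
    rw [biUnion_insert, id_eq] at hle
    omega

lemma cf_no_big_bad (ht : 2 ≤ t) (h : CoverFree t F) (k : ℕ)
    (hk : n - t ≤ (t + 1).choose 2 * k)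
    (S : Finset (Finset (Fin n))) (hSF : S ⊆ F) (hScard : S.card = t + 1)
    (hbad : ∀ D ∈ S, k ≤ D.card ∧ D.Nonempty ∧
      (∀ T ⊆ D, T.card = k → ∃ C ∈ F.erase D, T ⊆ C)) : False := by
  have hsum := cf_sum ht h k S hSF hbad (by omega)
  rw [hScard] at hsum
  have hval : ∑ i ∈ Finset.range (t + 1), ((t - i) * k + 1)
      = (t + 1).choose 2 * k + (t + 1) := by
    rw [Finset.sum_add_distrib, Finset.sum_const, Finset.card_range, ← Finset.sum_mul]
    have h1 : ∑ i ∈ Finset.range (t + 1), (t - i) = ∑ i ∈ Finset.range (t + 1), i := by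
      simpa using Finset.sum_range_reflect (fun i => i) (t + 1)
    have h2 : (∑ i ∈ Finset.range (t + 1), i) * 2 = (t + 1) * t :=  by
      simpa using Finset.sum_range_id_mul_two (t + 1)
    have h3 : (t + 1).choose 2 = (t + 1) * t / 2 := by
      rw [Nat.choose_two_right]; simp
    have h4 : (∑ i ∈ Finset.range (t + 1), i) = (t + 1).choose 2 := by
      rw [h3]; omega
    simp only [smul_eq_mul, mul_one]
    rw [h1, h4]
  have hle : (S.biUnion id).card ≤ n := by
    calc (S.biUnion id).card ≤ (Finset.univ : Finset (Fin n)).card := card_le_univ _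
      _ = n := by simp
  rw [hval] at hsum
  set c := (t + 1).choose 2 * k
  omega

end auxiliary

section shadowaux
variable {n : ℕ}


lemma local_lym_up {r : ℕ} (𝒜 : Finset (Finset (Fin n)))
    (h𝒜 : (𝒜 : Set (Finset (Fin n))).Sized r) (hr : r + 1 ≤ n - r) :
    𝒜.card ≤ (∂⁺ 𝒜).card := by
  classical
  have hc : ((𝒜ᶜˢ : Finset (Finset (Fin n))) : Set (Finset (Fin n))).Sized (n - r) := by
    have := h𝒜.compls
    simpa using this
  have hlym := Finset.card_mul_le_card_shadow_mul hc
  rw [Finset.shadow_compls, Finset.card_compls, Finset.card_compls] at hlym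
  have hcard : Fintype.card (Fin n) = n := Fintype.card_fin n
  rw [hcard] at hlym
  have h1 : n - (n - r) + 1 = r + 1 := by omega
  rw [h1] at hlym
  have h2 : (∂⁺ 𝒜).card * (r + 1) ≤ (∂⁺ 𝒜).card * (n - r) :=
    Nat.mul_le_mul_left _ hr
  have h3 : 𝒜.card * (n - r) ≤ (∂⁺ 𝒜).card * (n - r) := hlym.trans h2
  exact Nat.le_of_mul_le_mul_right h3 (by omega)

lemma antichain_upshadow {k : ℕ} (hkn : 2 * k ≤ n + 1)
    (S : Finset (Finset (Fin n)))
    (hanti : ∀ A ∈ S, ∀ B ∈ S, A ≠ B → ¬ A ⊆ B)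
    (hsz : ∀ A ∈ S, A.card < k) :
    S.card ≤ ((Finset.univ.powersetCard k).filter
      (fun T => ∃ A ∈ S, A ⊆ T)).card := by
  classical
  set W : ℕ → Finset (Finset (Fin n)) := fun j =>
    Nat.rec (S.filter (fun A => A.card = 0))
      (fun j Wj => S.filter (fun A => A.card = j + 1) ∪ ∂⁺ Wj) j with hW
  have hWsucc : ∀ j, W (j + 1) = S.filter (fun A => A.card = j + 1) ∪ ∂⁺ (W j) :=
    fun j => rfl
  have hW0 : W 0 = S.filter (fun A => A.card = 0) := rfl
  -- invariant
  have hinv : ∀ j, (∀ T ∈ W j, T.card = j ∧ ∃ A ∈ S, A ⊆ T) := by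
    intro j
    induction j with
    | zero =>
      intro T hT
      rw [hW0, mem_filter] at hT
      exact ⟨hT.2, T, hT.1, Subset.rfl⟩
    | succ j ih =>
      intro T hT
      rw [hWsucc, mem_union] at hT
      rcases hT with hT | hT
      · rw [mem_filter] at hT
        exact ⟨hT.2, T, hT.1, Subset.rfl⟩
      · obtain ⟨T', hT', hsub⟩ := Finset.exists_subset_of_mem_upShadow hT
        obtain ⟨hcard, A, hA, hAT'⟩ := ih T' hT'
        constructor
        · have := (Set.Sized.upShadow (fun x hx => (ih x hx).1)) hT
          exact this
        · exact ⟨A, hA, hAT'.trans hsub⟩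
  have hcount : ∀ j, j ≤ k → (S.filter (fun A => A.card ≤ j)).card ≤ (W j).card := by
    intro j
    induction j with
    | zero =>
      intro _
      apply card_le_card
      intro A hA
      rw [mem_filter] at hA
      rw [hW0, mem_filter]
      exact ⟨hA.1, Nat.le_zero.1 hA.2⟩
    | succ j ih =>
      intro hjk
      have hdisj : Disjoint (S.filter (fun A => A.card = j + 1)) (∂⁺ (W j)) := by
        rw [Finset.disjoint_left]
        intro A hA hA'
        rw [mem_filter] at hA
        obtain ⟨T', hT', hsub⟩ := Finset.exists_subset_of_mem_upShadow hA'
        obtain ⟨hcard, B, hB, hBT'⟩ := hinv j T' hT'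
        have hBA : B ⊆ A := hBT'.trans hsub
        have hBne : B ≠ A := by
          intro hbe
          have h5 := card_le_card hBT'
          rw [hbe, hcard] at h5
          have h6 := hA.2
          omega
        exact hanti B hB A hA.1 hBne hBA
      have hlym : (W j).card ≤ (∂⁺ (W j)).card := by
        apply local_lym_up (r := j)
        · intro x hx; exact (hinv j x hx).1
        · omega
      have hsplit : (S.filter (fun A => A.card ≤ j + 1)).card
          = (S.filter (fun A => A.card ≤ j)).card
            + (S.filter (fun A => A.card = j + 1)).card := by
        rw [← card_union_of_disjoint]
        · congr 1
          ext A
          simp only [mem_union, mem_filter]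
          constructor
          · rintro ⟨hA, hc⟩
            rcases Nat.lt_or_ge A.card (j+1) with h | h
            · exact Or.inl ⟨hA, by omega⟩
            · exact Or.inr ⟨hA, by omega⟩
          · rintro (⟨hA, hc⟩ | ⟨hA, hc⟩) <;> exact ⟨‹_›, by omega⟩
        · rw [Finset.disjoint_left]
          intro A hA hA'
          rw [mem_filter] at hA hA'
          omega
      rw [hsplit, hWsucc, card_union_of_disjoint hdisj]
      have := ih (by omega)
      omega
  have hfin : (S.filter (fun A => A.card ≤ k)).card = S.card := by
    congr 1
    apply Finset.filter_true_of_mem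
    intro A hA
    exact (hsz A hA).le
  have hWk := hcount k le_rfl
  rw [hfin] at hWk
  refine hWk.trans (card_le_card ?_)
  intro T hT
  obtain ⟨hcard, A, hA, hAT⟩ := hinv k T hT
  rw [mem_filter, Finset.mem_powersetCard]
  exact ⟨⟨subset_univ _, hcard⟩, A, hA, hAT⟩

end shadowaux

theorem stmt_15 (n t : ℕ) (ht : 2 ≤ t)
    (F : Finset (Finset (Fin n))) (h : CoverFree t F) :
    F.card ≤ t + n.choose ((n - t) ⌈/⌉ (t + 1).choose 2) := by
  classical
  set c := (t + 1).choose 2 with hc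
  set k := (n - t) ⌈/⌉ c with hk
  have hc3 : 3 ≤ c := by
    have h6 : 3 * 2 ≤ (t + 1) * t := Nat.mul_le_mul (by omega) (by omega)
    have : c = (t + 1) * t / 2 := by
      rw [hc, Nat.choose_two_right]; simp
    omega
  have hck : n - t ≤ c * k := by
    have := le_smul_ceilDiv (b := n - t) (a := c) (by omega)
    simpa [smul_eq_mul, hk] using this
  -- k ≤ n and (when k ≥ 1) 3k ≤ n
  have h3k : 1 ≤ k → 3 * k ≤ n := by
    intro hk1
    have hmul : k * c ≤ (n - t) + c - 1 := by
      rw [hk, Nat.ceilDiv_eq_add_pred_div]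
      exact Nat.div_mul_le_self _ _
    obtain ⟨k', hkk⟩ : ∃ k', k = k' + 1 := ⟨k - 1, by omega⟩
    have hexp : k * c = k' * c + c := by rw [hkk]; ring
    have h3 : k' * 3 ≤ k' * c := Nat.mul_le_mul_left _ hc3
    omega
  have hkn : k ≤ n := by
    rcases Nat.eq_zero_or_pos k with h0 | h1
    · omega
    · have := h3k h1; omega
  have hchoose : 1 ≤ n.choose k := Nat.choose_pos hkn
  rcases le_or_gt F.card (t + 1) with hFsmall | hFbig
  · omega
  -- Now F.card ≥ t + 2
  have hF2 : 2 ≤ F.card := by omega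
  have hAC : ∀ A ∈ F, ∀ B ∈ F, A ≠ B → ¬ A ⊆ B :=
    fun A hA B hB hne => cf_antichain (by omega) h hA hB hne
  set P : Finset (Fin n) → Prop :=
    fun D => ∃ T, T ⊆ D ∧ T.card = k ∧ ∀ C ∈ F.erase D, ¬ T ⊆ C with hP
  set Good := F.filter P with hGood
  set Rest := F.filter (fun D => ¬ P D) with hRest
  have hsplit1 : Good.card + Rest.card = F.card :=
    card_filter_add_card_filter_not _
  set Small := Rest.filter (fun D => D.card < k) with hSmall
  set BB := Rest.filter (fun D => ¬ D.card < k) with hBB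
  have hsplit2 : Small.card + BB.card = Rest.card :=
    card_filter_add_card_filter_not _
  -- BB.card ≤ t
  have hBBt : BB.card ≤ t := by
    by_contra hcon
    push_neg at hcon
    obtain ⟨S, hSsub, hScard⟩ := exists_subset_card_eq (show t + 1 ≤ BB.card by omega)
    refine cf_no_big_bad ht h k hck S ?_ hScard ?_
    · intro D hD
      exact (mem_filter.1 ((mem_filter.1 (hSsub hD)).1)).1
    · intro D hD
      have hDBB := hSsub hD
      rw [hBB, mem_filter] at hDBB
      have hDRest := hDBB.1
      rw [hRest, mem_filter] at hDRest
      have hDF : D ∈ F := hDRest.1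
      refine ⟨by omega, cf_nonempty (by omega) h hF2 hDF, ?_⟩
      intro T hTD hTk
      by_contra hcon
      push_neg at hcon
      exact hDRest.2 ⟨T, hTD, hTk, hcon⟩
  -- Good.card + Small.card ≤ n.choose k
  have hGS : Good.card + Small.card ≤ n.choose k := by
    rcases Nat.eq_zero_or_pos k with hk0 | hk1
    · -- k = 0 : Good and Small are both empty
      have hGe : Good = ∅ := by
        rw [hGood, filter_eq_empty_iff]
        rintro D hD ⟨T, hTD, hTk, hTown⟩
        obtain ⟨B, hB, hne⟩ := (Finset.one_lt_card_iff_nontrivial.1 hF2).exists_ne D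
        refine hTown B (mem_erase.2 ⟨hne, hB⟩) ?_
        have hTe : T = ∅ := card_eq_zero.1 (by omega)
        simp [hTe]
      have hSe : Small = ∅ := by
        rw [hSmall, filter_eq_empty_iff]
        intro D _
        omega
      rw [hGe, hSe]
      simpa using hchoose
    · set X := (Finset.univ.powersetCard k).filter
        (fun T => ∃ A ∈ Small, A ⊆ T) with hX
      set Y := (Finset.univ.powersetCard k).filter
        (fun T => ¬ ∃ A ∈ Small, A ⊆ T) with hY
      have hXY : X.card + Y.card = n.choose k := by
        rw [hX, hY, card_filter_add_card_filter_not, card_powersetCard]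
        simp
      have hSX : Small.card ≤ X.card := by
        apply antichain_upshadow
        · have := h3k hk1; omega
        · intro A hA B hB hne
          exact hAC A (mem_filter.1 (mem_filter.1 hA).1).1
            B (mem_filter.1 (mem_filter.1 hB).1).1 hne
        · intro A hA
          exact (mem_filter.1 hA).2
      have hGY : Good.card ≤ Y.card := by
        set f : Finset (Fin n) → Finset (Fin n) :=
          fun D => if hPD : P D then hPD.choose else ∅ with hf
        apply card_le_card_of_injOn f
        · intro D hD
          have hPD : P D := (mem_filter.1 hD).2
          have hDF : D ∈ F := (mem_filter.1 hD).1
          obtain ⟨hTD, hTk, hTown⟩ := hPD.choose_spec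
          rw [hf]
          simp only [dif_pos hPD]
          rw [hY, mem_coe, mem_filter, Finset.mem_powersetCard]
          refine ⟨⟨subset_univ _, hTk⟩, ?_⟩
          rintro ⟨A, hAS, hAT⟩
          have hAF : A ∈ F := (mem_filter.1 (mem_filter.1 hAS).1).1
          have hAk : A.card < k := (mem_filter.1 hAS).2
          have hAD : A ⊆ D := hAT.trans hTD
          have hAne : A ≠ D := by
            intro hEq
            have hcard1 := card_le_card hTD
            rw [hEq] at hAk
            omega
          exact hAC A hAF D hDF hAne hAD
        · intro D hD D' hD' hEq
          have hDg : D ∈ Good := hD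
          have hDg' : D' ∈ Good := hD'
          have hPD : P D := (mem_filter.1 hDg).2
          have hPD' : P D' := (mem_filter.1 hDg').2
          have hDF' : D' ∈ F := (mem_filter.1 hDg').1
          rw [hf] at hEq
          simp only [dif_pos hPD, dif_pos hPD'] at hEq
          obtain ⟨hTD, hTk, hTown⟩ := hPD.choose_spec
          obtain ⟨hTD', hTk', hTown'⟩ := hPD'.choose_spec
          by_contra hne
          exact hTown D' (mem_erase.2 ⟨Ne.symm hne, hDF'⟩) (hEq ▸ hTD')
      omega
  omega
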